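/- For θ ∈ ℝ let D(θ) = 3·(901 − 443072·θ(1−θ)) and define p(θ) ∈ ℝ⁴ by p(θ) = (0, 10(−3171 − 17332θ + 20640θ²)/D(θ), 10(137 − 23948θ + 20640θ²)/D(θ), (33043 − 916416·θ(1−θ))/D(θ)). Then for every θ ∈ [4961/10000, 1/2], all four coordinates of p(θ) are nonnegative and they sum to 1 (so p(θ) is a probability vector); moreover p(1/2) = (0, 110/543, 110/543, 323/543). -/

import Mathlib

/-- The Players' optimal correlated mixed strategy on the final θ-interval. -/
noncomputable def playersStrategy (θ : ℝ) : Fin 4 → ℝ :=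
  ![0,
    10 * (-3171 - 17332 * θ + 20640 * θ ^ 2) / (3 * (901 - 443072 * (θ * (1 - θ)))),
    10 * (137 - 23948 * θ + 20640 * θ ^ 2) / (3 * (901 - 443072 * (θ * (1 - θ)))),
    (33043 - 916416 * (θ * (1 - θ))) / (3 * (901 - 443072 * (θ * (1 - θ))))]

/-- For every `θ ∈ [0.4961, 1/2]`, `p(θ)` is a probability vector, and
`p(1/2) = (0, 110/543, 110/543, 323/543)`. -/
theorem playersStrategy_is_probability_vector :
    (∀ θ ∈ Set.Icc (4961 / 10000 : ℝ) (1 / 2),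
        (∀ i, 0 ≤ playersStrategy θ i) ∧ ∑ i, playersStrategy θ i = 1) ∧
      playersStrategy (1 / 2) = ![0, 110 / 543, 110 / 543, 323 / 543] := by
  constructor
  · rintro θ ⟨h1, h2⟩
    have hmul : (θ - 4961 / 10000) * (1 / 2 - θ) ≥ 0 :=
      mul_nonneg (by linarith) (by linarith)
    have hD : 3 * (901 - 443072 * (θ * (1 - θ))) < 0 := by nlinarith
    have hD' : 3 * (901 - 443072 * (θ * (1 - θ))) ≠ 0 := ne_of_lt hD
    constructor
    · intro i
      fin_cases i <;> simp [playersStrategy]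
      · exact div_nonneg_of_nonpos (by nlinarith) hD.le
      · exact div_nonneg_of_nonpos (by nlinarith) hD.le
      · exact div_nonneg_of_nonpos (by nlinarith) hD.le
    · simp [playersStrategy, Fin.sum_univ_four]
      rw [← add_div, ← add_div, div_eq_one_iff_eq hD']
      ring
  · funext i
    fin_cases i <;> norm_num [playersStrategy]
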